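/- (Singleton bound for rank metric codes, Delsarte) Let m, n ≥ d ≥ 1 be positive integers and q a prime power. If C is a set of m×n matrices over F_q such that any two distinct elements U, W of C satisfy rank(U - W) ≥ d, then #C ≤ q^{max(n,m)·(min(n,m) - d + 1)}. -/

import Mathlib

open Matrix Finset

/-- If all rows of `M` with index `< k` vanish, then `rank M ≤ a - k`. -/
lemma rank_le_of_zero_rows {F : Type*} [Field F] {a b k : ℕ} (hka : k ≤ a)
    (M : Matrix (Fin a) (Fin b) F) (h0 : ∀ i : Fin a, (i : ℕ) < k → M i = 0) :
    M.rank ≤ a - k := by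
  classical
  rw [Matrix.rank_eq_finrank_span_row]
  set s : Finset (Fin b → F) := (Finset.univ.filter (fun i : Fin a => k ≤ (i : ℕ))).image M
    with hs
  have hsub : Set.range M ⊆ insert 0 ↑s := by
    rintro _ ⟨i, rfl⟩
    by_cases hi : (i : ℕ) < k
    · exact Or.inl (h0 i hi)
    · right
      simp only [hs, Finset.coe_image, Finset.coe_filter, Set.mem_image]
      exact Finset.mem_coe.mpr (Finset.mem_image.mpr ⟨i, by simpa using not_lt.mp hi, rfl⟩)
  calc Module.finrank F (Submodule.span F (Set.range M))
      ≤ Module.finrank F (Submodule.span F (insert (0 : Fin b → F) ↑s)) :=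
        Submodule.finrank_mono (Submodule.span_mono hsub)
    _ = Module.finrank F (Submodule.span F (↑s : Set (Fin b → F))) := by
        rw [Submodule.span_insert_zero]
    _ ≤ s.card := finrank_span_finset_le_card _
    _ ≤ (Finset.univ.filter (fun i : Fin a => k ≤ (i : ℕ))).card := Finset.card_image_le
    _ ≤ a - k := by
        have := Finset.card_le_card_of_injOn (s := Finset.univ.filter (fun i : Fin a => k ≤ (i : ℕ))) (t := Finset.range (a - k))
          (fun i : Fin a => (i : ℕ) - k)
          (by
            intro x hx
            have hx' : k ≤ (x : ℕ) := (Finset.mem_filter.mp hx).2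
            refine Finset.mem_range.mpr ?_
            have hxa := x.isLt
            show (x : ℕ) - k < a - k
            omega)
          (by
            intro x hx y hy hxy
            have hx' : k ≤ (x : ℕ) := (Finset.mem_filter.mp hx).2
            have hy' : k ≤ (y : ℕ) := (Finset.mem_filter.mp hy).2
            have hxy' : (x : ℕ) - k = (y : ℕ) - k := hxy
            have hxa := x.isLt
            have hya := y.isLt
            ext
            omega)
        simpa using this

lemma aux_bound {F : Type*} [Field F] [Fintype F] {q a b d : ℕ}
    (hq : Fintype.card F = q) (hd1 : 1 ≤ d) (hda : d ≤ a)
    (C : Finset (Matrix (Fin a) (Fin b) F))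
    (hC : ∀ U ∈ C, ∀ W ∈ C, U ≠ W → d ≤ (U - W).rank) :
    C.card ≤ q ^ (b * (a - d + 1)) := by
  classical
  set k := a - d + 1 with hk
  have hka : k ≤ a := by omega
  have hinj : Set.InjOn (fun M : Matrix (Fin a) (Fin b) F =>
      (fun i : Fin k => M (Fin.castLE hka i))) C := by
    intro U hU W hW hUW
    by_contra hne
    have hd := hC U hU W hW hne
    have h0 : ∀ i : Fin a, (i : ℕ) < k → (U - W) i = 0 := by
      intro i hi
      have h1 : U (Fin.castLE hka ⟨(i : ℕ), hi⟩) = W (Fin.castLE hka ⟨(i : ℕ), hi⟩) :=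
        congrFun hUW ⟨(i : ℕ), hi⟩
      have h2 : (Fin.castLE hka ⟨(i:ℕ), hi⟩) = i := by ext; simp
      rw [h2] at h1
      funext j
      simp [Matrix.sub_apply, h1]
    have := rank_le_of_zero_rows hka (U - W) h0
    omega
  calc C.card ≤ Fintype.card (Fin k → Fin b → F) := by
        have := Finset.card_le_card_of_injOn _ (fun x _ => Finset.mem_univ _) hinj
        simpa using this
    _ = q ^ (b * k) := by
        simp [hq, ← pow_mul, mul_comm]

/-- **Singleton bound for rank metric codes** (Delsarte). If `C` is a set of `m × n`
matrices over `F_q` with minimum rank distance `d`, where `1 ≤ d ≤ m, n`, then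
`#C ≤ q ^ (max n m * (min n m - d + 1))`. -/
theorem delsarte_singleton_bound {F : Type*} [Field F] [Fintype F] {q m n d : ℕ}
    (hq : Fintype.card F = q) (hd1 : 1 ≤ d) (hdm : d ≤ m) (hdn : d ≤ n)
    (C : Finset (Matrix (Fin m) (Fin n) F))
    (hC : ∀ U ∈ C, ∀ W ∈ C, U ≠ W → d ≤ (U - W).rank) :
    C.card ≤ q ^ (max n m * (min n m - d + 1)) := by
  rcases le_total m n with h | h
  · rw [max_eq_left h, min_eq_right h]
    exact aux_bound hq hd1 hdm C hC
  · rw [max_eq_right h, min_eq_left h]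
    classical
    have hcard : C.card = (C.image Matrix.transpose).card := by
      rw [Finset.card_image_of_injective _ Matrix.transpose_injective]
    rw [hcard]
    apply aux_bound hq hd1 hdn
    intro U hU W hW hne
    simp only [Finset.mem_image] at hU hW
    obtain ⟨U', hU', rfl⟩ := hU
    obtain ⟨W', hW', rfl⟩ := hW
    have hne' : U' ≠ W' := fun h => hne (by rw [h])
    have := hC U' hU' W' hW' hne'
    rwa [← Matrix.transpose_sub, Matrix.rank_transpose]
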